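/- Let p be a prime, let (n_k) be a strictly increasing sequence of nonnegative integers with n_{k+1} − n_k → ∞, and for each k let u_k be the character of the group Δ_p of p-adic integers given by u_k(ω) = exp(2πi (a_0 + a_1 p + … + a_{n_k} p^{n_k}) / p^{n_k+1}) for ω ∈ Δ_p with p-adic digit expansion ω = Σ_n a_n p^n, 0 ≤ a_n < p. For ω ∈ Δ_p and k > 1 define d_k = n_k if 0 < a_{n_k} < p − 1, and otherwise d_k = min{ j : either a_s = 0 for every j < s ≤ n_k, or a_s = p − 1 for every j < s ≤ n_k }; and set m_k = max(d_k, n_{k−1}). Then u_k(ω) → 1 as k → ∞ if and only if n_k − m_k → ∞. -/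

import Mathlib

open Filter Topology

/-- The `i`-th digit `a_i ∈ {0, …, p-1}` in the canonical expansion
`ω = Σ_i a_i p^i` of a `p`-adic integer `ω`, extracted from the approximations
`ω.appr m ≡ ω [mod p^m]`, `0 ≤ ω.appr m < p^m`. -/
noncomputable def padicDigit (p : ℕ) [Fact p.Prime] (ω : ℤ_[p]) (i : ℕ) : ℕ :=
  (ω.appr (i + 1) - ω.appr i) / p ^ i

/-- The value at `ω ∈ Δ_p` of the character of `Δ_p` given by the element `1/p^m` of the
Prüfer group `ℤ(p^∞)`: namely `exp(2πi (a_0 + a_1 p + ⋯ + a_{m-1} p^{m-1}) / p^m)`,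
where `a_0 + a_1 p + ⋯ + a_{m-1} p^{m-1} = ω.appr m`. -/
noncomputable def padicChar (p : ℕ) [Fact p.Prime] (m : ℕ) (ω : ℤ_[p]) : ℂ :=
  Complex.exp (2 * Real.pi * Complex.I * (ω.appr m : ℂ) / (p : ℂ) ^ m)

/-- The index `d_k` associated to `ω ∈ Δ_p` and the index `n_k`: it is `n_k` itself if
`0 < a_{n_k} < p - 1`, and otherwise the least `j` such that the digits `a_s` for
`j < s ≤ n_k` are either all `0` or all `p - 1`. -/
noncomputable def dIdx (p : ℕ) [Fact p.Prime] (ω : ℤ_[p]) (nk : ℕ) : ℕ :=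
  if 0 < padicDigit p ω nk ∧ padicDigit p ω nk < p - 1 then nk
  else sInf {j : ℕ | (∀ s, j < s → s ≤ nk → padicDigit p ω s = 0) ∨
                     (∀ s, j < s → s ≤ nk → padicDigit p ω s = p - 1)}

/-- `m_k = max (d_k, n_{k-1})`. -/
noncomputable def mIdx (p : ℕ) [Fact p.Prime] (ω : ℤ_[p]) (n : ℕ → ℕ) (k : ℕ) : ℕ :=
  max (dIdx p ω (n k)) (n (k - 1))

section Aux

variable {p : ℕ} [Fact p.Prime] (ω : ℤ_[p])

lemma appr_succ_eq (i : ℕ) :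
    ω.appr (i + 1) = ω.appr i + padicDigit p ω i * p ^ i := by
  have hd : p ^ i ∣ ω.appr (i + 1) - ω.appr i :=
    PadicInt.dvd_appr_sub_appr ω i (i + 1) (Nat.le_succ i)
  have hle : ω.appr i ≤ ω.appr (i + 1) := ω.appr_mono (Nat.le_succ i)
  have := Nat.div_mul_cancel hd
  unfold padicDigit
  omega

lemma padicDigit_lt (i : ℕ) : padicDigit p ω i < p := by
  have h1 : ω.appr (i + 1) < p ^ (i + 1) := ω.appr_lt (i + 1)
  have h2 := appr_succ_eq ω i
  have hp : 0 < p ^ i := pow_pos (Fact.out : p.Prime).pos i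
  have : padicDigit p ω i * p ^ i < p * p ^ i := by
    rw [pow_succ, mul_comm (p ^ i) p] at h1; omega
  exact lt_of_mul_lt_mul_right this (Nat.zero_le _)

lemma appr_run_zero {j m : ℕ} (hjm : j ≤ m)
    (h : ∀ s, j < s → s ≤ m → padicDigit p ω s = 0) :
    ω.appr (m + 1) = ω.appr (j + 1) := by
  induction m, hjm using Nat.le_induction with
  | base => rfl
  | succ m hjm ih =>
    have h0 : padicDigit p ω (m + 1) = 0 := h (m + 1) (by omega) le_rfl
    have := appr_succ_eq ω (m + 1)
    rw [h0] at this
    rw [this, zero_mul, add_zero]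
    exact ih (fun s hs hs' => h s hs (by omega))

lemma appr_run_top {j m : ℕ} (hjm : j ≤ m)
    (h : ∀ s, j < s → s ≤ m → padicDigit p ω s = p - 1) :
    ω.appr (m + 1) + p ^ (j + 1) = ω.appr (j + 1) + p ^ (m + 1) := by
  induction m, hjm using Nat.le_induction with
  | base => rfl
  | succ m hjm ih =>
    have h0 : padicDigit p ω (m + 1) = p - 1 := h (m + 1) (by omega) le_rfl
    have hs := appr_succ_eq ω (m + 1)
    rw [h0] at hs
    have ih' := ih (fun s hs hs' => h s hs (by omega))
    have hp : 1 ≤ p := (Fact.out : p.Prime).pos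
    have e1 : p ^ (m + 1 + 1) = p * p ^ (m + 1) := by ring
    have e2 : (p - 1) * p ^ (m + 1) + p ^ (m + 1) = p * p ^ (m + 1) := by
      have h3 : (p - 1) * p ^ (m + 1) + p ^ (m + 1) = (p - 1 + 1) * p ^ (m + 1) := by ring
      rw [h3, Nat.sub_add_cancel hp]
    omega

lemma mem_dSet (N : ℕ) : N ∈ {j : ℕ | (∀ s, j < s → s ≤ N → padicDigit p ω s = 0) ∨
                     (∀ s, j < s → s ≤ N → padicDigit p ω s = p - 1)} :=
  Or.inl (fun s h1 h2 => absurd h2 (by omega))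

lemma dIdx_le (N : ℕ) : dIdx p ω N ≤ N := by
  unfold dIdx; split
  · exact le_rfl
  · exact Nat.sInf_le (mem_dSet ω N)

lemma dIdx_eq_sInf {N : ℕ} (hA : ¬(0 < padicDigit p ω N ∧ padicDigit p ω N < p - 1)) :
    dIdx p ω N = sInf {j : ℕ | (∀ s, j < s → s ≤ N → padicDigit p ω s = 0) ∨
                     (∀ s, j < s → s ≤ N → padicDigit p ω s = p - 1)} := by
  unfold dIdx; rw [if_neg hA]

lemma key_upper (N : ℕ) :
    ω.appr (N + 1) ≤ p ^ (dIdx p ω N + 1) ∨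
      p ^ (N + 1) ≤ ω.appr (N + 1) + p ^ (dIdx p ω N + 1) := by
  by_cases hA : 0 < padicDigit p ω N ∧ padicDigit p ω N < p - 1
  · have hd : dIdx p ω N = N := by unfold dIdx; rw [if_pos hA]
    rw [hd]
    exact Or.inl (le_of_lt (ω.appr_lt (N + 1)))
  · rw [dIdx_eq_sInf ω hA]
    have hDN : sInf {j : ℕ | (∀ s, j < s → s ≤ N → padicDigit p ω s = 0) ∨
                     (∀ s, j < s → s ≤ N → padicDigit p ω s = p - 1)} ≤ N :=
      Nat.sInf_le (mem_dSet ω N)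
    have hmem := Nat.sInf_mem (⟨N, mem_dSet ω N⟩ : Set.Nonempty {j : ℕ |
      (∀ s, j < s → s ≤ N → padicDigit p ω s = 0) ∨
      (∀ s, j < s → s ≤ N → padicDigit p ω s = p - 1)})
    rcases hmem with hz | ht
    · left
      rw [appr_run_zero ω hDN hz]
      exact le_of_lt (ω.appr_lt _)
    · right
      have := appr_run_top ω hDN ht
      omega

lemma key_lower (N : ℕ)
    (hD : 1 ≤ dIdx p ω N ∨ (0 < padicDigit p ω N ∧ padicDigit p ω N < p - 1)) :
    p ^ (dIdx p ω N) ≤ ω.appr (N + 1) ∧ ω.appr (N + 1) + p ^ (dIdx p ω N) ≤ p ^ (N + 1) := by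
  have hp2 : 2 ≤ p := (Fact.out : p.Prime).two_le
  by_cases hA : 0 < padicDigit p ω N ∧ padicDigit p ω N < p - 1
  · -- case A : 0 < a_N < p - 1
    have hd : dIdx p ω N = N := by unfold dIdx; rw [if_pos hA]
    rw [hd]
    have h1 := appr_succ_eq ω N
    have h2 : ω.appr N < p ^ N := ω.appr_lt N
    have h3 : p ^ N ≤ padicDigit p ω N * p ^ N :=
      Nat.le_mul_of_pos_left _ hA.1
    have h4 : padicDigit p ω N * p ^ N ≤ (p - 2) * p ^ N :=
      Nat.mul_le_mul_right _ (by omega)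
    have h5 : (p - 2) * p ^ N + 2 * p ^ N = p * p ^ N := by
      have e1 : (p - 2) * p ^ N + 2 * p ^ N = (p - 2 + 2) * p ^ N := by ring
      have e2 : p - 2 + 2 = p := by omega
      rw [e1, e2]
    have h7 : p ^ (N + 1) = p * p ^ N := by ring
    omega
  · -- case B
    rw [dIdx_eq_sInf ω hA] at hD ⊢
    set D := sInf {j : ℕ | (∀ s, j < s → s ≤ N → padicDigit p ω s = 0) ∨
                     (∀ s, j < s → s ≤ N → padicDigit p ω s = p - 1)} with hDdef
    have hD1 : 1 ≤ D := by
      rcases hD with h | h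
      · exact h
      · exact absurd h hA
    have hDN : D ≤ N := Nat.sInf_le (mem_dSet ω N)
    have hmem : D ∈ {j : ℕ | (∀ s, j < s → s ≤ N → padicDigit p ω s = 0) ∨
                     (∀ s, j < s → s ≤ N → padicDigit p ω s = p - 1)} :=
      Nat.sInf_mem ⟨N, mem_dSet ω N⟩
    have hNpos : 1 ≤ N := le_trans hD1 hDN
    have haN : padicDigit p ω N = 0 ∨ padicDigit p ω N = p - 1 := by
      have := padicDigit_lt ω N; omega
    have hDltN : D < N := by
      have hmem' : N - 1 ∈ {j : ℕ | (∀ s, j < s → s ≤ N → padicDigit p ω s = 0) ∨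
                     (∀ s, j < s → s ≤ N → padicDigit p ω s = p - 1)} := by
        rcases haN with h | h
        · exact Or.inl (fun s h1 h2 => by
            have hs : s = N := by omega
            rw [hs]; exact h)
        · exact Or.inr (fun s h1 h2 => by
            have hs : s = N := by omega
            rw [hs]; exact h)
      have := Nat.sInf_le hmem'
      omega
    have hnotmem : (D - 1) ∉ {j : ℕ | (∀ s, j < s → s ≤ N → padicDigit p ω s = 0) ∨
                     (∀ s, j < s → s ≤ N → padicDigit p ω s = p - 1)} := by
      rw [hDdef]
      exact Nat.notMem_of_lt_sInf (by omega)
    have hsD := appr_succ_eq ω D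
    have happrD : ω.appr D < p ^ D := ω.appr_lt D
    have hpow1 : p ^ (D + 1) = p * p ^ D := by ring
    have hpow2 : p ^ (D + 1) ≤ p ^ N := Nat.pow_le_pow_right (by omega) (by omega)
    have hpow3 : p ^ D ≤ p ^ N := Nat.pow_le_pow_right (by omega) (by omega)
    have hpow4 : p ^ (N + 1) = p * p ^ N := by ring
    have hpow5 : 2 * p ^ N ≤ p * p ^ N := Nat.mul_le_mul_right _ hp2
    have hpow6 : 2 * p ^ D ≤ p * p ^ D := Nat.mul_le_mul_right _ hp2
    rcases hmem with hz | ht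
    · -- digits zero on (D, N]
      have hrun := appr_run_zero ω hDN hz
      have haD : padicDigit p ω D ≠ 0 := by
        intro h0
        apply hnotmem
        refine Or.inl (fun s h1 h2 => ?_)
        rcases Nat.lt_or_ge D s with hs | hs
        · exact hz s hs h2
        · have hs' : s = D := by omega
          rw [hs']; exact h0
      have h3 : p ^ D ≤ padicDigit p ω D * p ^ D :=
        Nat.le_mul_of_pos_left _ (by omega)
      have h4 : ω.appr (D + 1) < p ^ (D + 1) := ω.appr_lt (D + 1)
      omega
    · -- digits p-1 on (D, N]
      have hrun := appr_run_top ω hDN ht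
      have haD : padicDigit p ω D ≠ p - 1 := by
        intro h0
        apply hnotmem
        refine Or.inr (fun s h1 h2 => ?_)
        rcases Nat.lt_or_ge D s with hs | hs
        · exact ht s hs h2
        · have hs' : s = D := by omega
          rw [hs']; exact h0
      have h4 : padicDigit p ω D * p ^ D ≤ (p - 2) * p ^ D := by
        have := padicDigit_lt ω D
        exact Nat.mul_le_mul_right _ (by omega)
      have h5 : (p - 2) * p ^ D + 2 * p ^ D = p * p ^ D := by
        have e1 : (p - 2) * p ^ D + 2 * p ^ D = (p - 2 + 2) * p ^ D := by ring
        have e2 : p - 2 + 2 = p := by omega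
        rw [e1, e2]
      omega

lemma norm_addCircle_eq {x : ℝ} (h0 : 0 ≤ x) (h1 : x < 1) :
    ‖((x : ℝ) : AddCircle (1 : ℝ))‖ = min x (1 - x) := by
  rw [AddCircle.norm_eq]
  simp only [inv_one, one_mul, mul_one]
  rw [abs_sub_round_eq_min, Int.fract_eq_self.mpr ⟨h0, h1⟩]

lemma coe_toCircle_eq (t : ℝ) :
    ((AddCircle.toCircle ((t : ℝ) : AddCircle (1 : ℝ))) : ℂ) =
      Complex.exp (2 * (Real.pi : ℂ) * Complex.I * (t : ℂ)) := by
  rw [AddCircle.toCircle_apply_mk, Circle.coe_exp]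
  push_cast
  ring_nf

lemma tendsto_exp_iff_norm (x : ℕ → ℝ) :
    Tendsto (fun k => Complex.exp (2 * (Real.pi : ℂ) * Complex.I * (x k : ℂ))) atTop (𝓝 1)
      ↔ Tendsto (fun k => ‖((x k : ℝ) : AddCircle (1 : ℝ))‖) atTop (𝓝 0) := by
  have h1 : Tendsto (fun k => Complex.exp (2 * (Real.pi : ℂ) * Complex.I * (x k : ℂ)))
      atTop (𝓝 1)
      ↔ Tendsto (fun k => AddCircle.toCircle ((x k : ℝ) : AddCircle (1 : ℝ))) atTop (𝓝 1) := by
    have hh : Tendsto (fun k => AddCircle.toCircle ((x k : ℝ) : AddCircle (1 : ℝ))) atTop (𝓝 1) ↔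
        Tendsto (fun k => ((AddCircle.toCircle ((x k : ℝ) : AddCircle (1 : ℝ)) : Circle) : ℂ))
          atTop (𝓝 ((1 : Circle) : ℂ)) :=
      IsInducing.subtypeVal.tendsto_nhds_iff
    simp only [coe_toCircle_eq, Circle.coe_one] at hh
    exact hh.symm
  have h2 : Tendsto (fun k => AddCircle.toCircle ((x k : ℝ) : AddCircle (1 : ℝ))) atTop (𝓝 1)
      ↔ Tendsto (fun k => ((x k : ℝ) : AddCircle (1 : ℝ))) atTop (𝓝 0) := by
    have hh := (AddCircle.homeomorphCircle (one_ne_zero (α := ℝ))).isEmbedding.tendsto_nhds_iff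
      (f := fun k => ((x k : ℝ) : AddCircle (1 : ℝ))) (l := atTop) (y := 0)
    rw [hh]
    simp only [Function.comp_def, AddCircle.homeomorphCircle_apply, AddCircle.toCircle_zero]
  rw [h1, h2, tendsto_zero_iff_norm_tendsto_zero]

lemma x_nonneg (N : ℕ) : (0 : ℝ) ≤ (ω.appr (N + 1) : ℝ) / (p : ℝ) ^ (N + 1) := by
  positivity

lemma x_lt_one (N : ℕ) : (ω.appr (N + 1) : ℝ) / (p : ℝ) ^ (N + 1) < 1 := by
  have hp : (0 : ℝ) < (p : ℝ) ^ (N + 1) := by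
    have : 0 < p := (Fact.out : p.Prime).pos
    positivity
  rw [div_lt_one hp]
  exact_mod_cast ω.appr_lt (N + 1)

lemma norm_x_le (N : ℕ) :
    ‖(((ω.appr (N + 1) : ℝ) / (p : ℝ) ^ (N + 1) : ℝ) : AddCircle (1 : ℝ))‖
      ≤ (p : ℝ) ^ (dIdx p ω N + 1) / (p : ℝ) ^ (N + 1) := by
  have hp : (0 : ℝ) < (p : ℝ) ^ (N + 1) := by
    have : 0 < p := (Fact.out : p.Prime).pos
    positivity
  rw [norm_addCircle_eq (x_nonneg ω N) (x_lt_one ω N)]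
  rcases key_upper ω N with h | h
  · refine le_trans (min_le_left _ _) ?_
    rw [div_le_div_iff_of_pos_right hp]
    exact_mod_cast h
  · refine le_trans (min_le_right _ _) ?_
    rw [sub_le_iff_le_add, ← add_div, le_div_iff₀ hp, one_mul]
    have : ((p : ℝ)) ^ (N + 1) ≤ (ω.appr (N + 1) : ℝ) + (p : ℝ) ^ (dIdx p ω N + 1) := by
      exact_mod_cast h
    linarith

lemma norm_x_ge (N : ℕ)
    (hD : 1 ≤ dIdx p ω N ∨ (0 < padicDigit p ω N ∧ padicDigit p ω N < p - 1)) :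
    (p : ℝ) ^ (dIdx p ω N) / (p : ℝ) ^ (N + 1)
      ≤ ‖(((ω.appr (N + 1) : ℝ) / (p : ℝ) ^ (N + 1) : ℝ) : AddCircle (1 : ℝ))‖ := by
  have hp : (0 : ℝ) < (p : ℝ) ^ (N + 1) := by
    have : 0 < p := (Fact.out : p.Prime).pos
    positivity
  rw [norm_addCircle_eq (x_nonneg ω N) (x_lt_one ω N)]
  obtain ⟨h1, h2⟩ := key_lower ω N hD
  refine le_min ?_ ?_
  · rw [div_le_div_iff_of_pos_right hp]
    exact_mod_cast h1
  · rw [le_sub_iff_add_le, ← add_div, div_le_one hp]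
    have : (ω.appr (N + 1) : ℝ) + (p : ℝ) ^ (dIdx p ω N) ≤ (p : ℝ) ^ (N + 1) := by
      exact_mod_cast h2
    linarith

end Aux

/-- Let `p` be a prime, `(n_k)` a strictly increasing sequence of nonnegative integers with
`n_{k+1} - n_k → ∞`, and let `u_k` be the character of `Δ_p` given by
`u_k(ω) = exp(2πi (a_0 + a_1 p + ⋯ + a_{n_k} p^{n_k}) / p^{n_k + 1})`.
Then `u_k(ω) → 1` if and only if `n_k - m_k → ∞`. -/
theorem padicChar_tendsto_one_iff
    (p : ℕ) [Fact p.Prime] (n : ℕ → ℕ) (hmono : StrictMono n)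
    (hdiff : Tendsto (fun k => n (k + 1) - n k) atTop atTop) (ω : ℤ_[p]) :
    Tendsto (fun k => padicChar p (n k + 1) ω) atTop (𝓝 1)
      ↔ Tendsto (fun k => n k - mIdx p ω n k) atTop atTop := by
  have hp2 : 2 ≤ p := (Fact.out : p.Prime).two_le
  have hp1R : (1 : ℝ) < (p : ℝ) := by exact_mod_cast (by omega : 1 < p)
  -- Step 1: the character in terms of the AddCircle norm
  have hchar : (fun k => padicChar p (n k + 1) ω) = fun k =>
      Complex.exp (2 * (Real.pi : ℂ) * Complex.I *
        (((ω.appr (n k + 1) : ℝ) / (p : ℝ) ^ (n k + 1) : ℝ) : ℂ)) := by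
    funext k
    unfold padicChar
    push_cast
    ring_nf
  have step1 : Tendsto (fun k => padicChar p (n k + 1) ω) atTop (𝓝 1) ↔
      Tendsto (fun k =>
        ‖(((ω.appr (n k + 1) : ℝ) / (p : ℝ) ^ (n k + 1) : ℝ) : AddCircle (1 : ℝ))‖)
        atTop (𝓝 0) := by
    rw [hchar]
    exact tendsto_exp_iff_norm _
  -- Step 2: the norm tends to zero iff `n k - dIdx → ∞`
  have step2 : Tendsto (fun k =>
        ‖(((ω.appr (n k + 1) : ℝ) / (p : ℝ) ^ (n k + 1) : ℝ) : AddCircle (1 : ℝ))‖)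
        atTop (𝓝 0) ↔ Tendsto (fun k => n k - dIdx p ω (n k)) atTop atTop := by
    constructor
    · intro h
      rw [tendsto_atTop]
      intro M
      have hev1 : ∀ᶠ k in atTop,
          ‖(((ω.appr (n k + 1) : ℝ) / (p : ℝ) ^ (n k + 1) : ℝ) : AddCircle (1 : ℝ))‖
            < ((p : ℝ) ^ (M + 1))⁻¹ :=
        h.eventually_lt_const (by positivity)
      filter_upwards [hev1, eventually_ge_atTop M] with k hk1 hk2
      by_cases hD0 : dIdx p ω (n k) = 0
      · have := hmono.le_apply (x := k)
        omega
      · have hlow := norm_x_ge ω (n k) (Or.inl (by omega))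
        have hlt : (p : ℝ) ^ (dIdx p ω (n k)) / (p : ℝ) ^ (n k + 1)
            < ((p : ℝ) ^ (M + 1))⁻¹ := lt_of_le_of_lt hlow hk1
        have hp0 : (0 : ℝ) < (p : ℝ) ^ (n k + 1) := by positivity
        have hpM : (0 : ℝ) < (p : ℝ) ^ (M + 1) := by positivity
        rw [inv_eq_one_div, div_lt_div_iff₀ hp0 hpM, one_mul, ← pow_add] at hlt
        have hnat : p ^ (dIdx p ω (n k) + (M + 1)) < p ^ (n k + 1) := by
          exact_mod_cast hlt
        have hexp : dIdx p ω (n k) + (M + 1) < n k + 1 :=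
          (Nat.pow_lt_pow_iff_right (by omega)).mp hnat
        omega
    · intro h
      have hb : ∀ k, (p : ℝ) ^ (dIdx p ω (n k) + 1) / (p : ℝ) ^ (n k + 1)
          = ((p : ℝ) ^ (n k - dIdx p ω (n k)))⁻¹ := by
        intro k
        have hd := dIdx_le ω (n k)
        have hp0 : ((p : ℝ) ^ (n k + 1)) ≠ 0 := by positivity
        have hp1 : ((p : ℝ) ^ (n k - dIdx p ω (n k))) ≠ 0 := by positivity
        field_simp
        rw [← pow_add]
        congr 1
        omega
      have hbt : Tendsto (fun k => (p : ℝ) ^ (dIdx p ω (n k) + 1) / (p : ℝ) ^ (n k + 1))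
          atTop (𝓝 0) := by
        have := tendsto_inv_atTop_zero.comp
          ((tendsto_pow_atTop_atTop_of_one_lt hp1R).comp h)
        exact this.congr (fun k => (hb k).symm)
      exact squeeze_zero (fun k => norm_nonneg _) (fun k => norm_x_le ω (n k)) hbt
  -- Step 3: `n k - dIdx → ∞` iff `n k - mIdx → ∞`
  have htail : Tendsto (fun k => n k - n (k - 1)) atTop atTop := by
    rw [← tendsto_add_atTop_iff_nat 1]
    simpa using hdiff
  have hmin : ∀ k, n k - mIdx p ω n k = min (n k - dIdx p ω (n k)) (n k - n (k - 1)) := by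
    intro k
    unfold mIdx
    omega
  have step3 : Tendsto (fun k => n k - dIdx p ω (n k)) atTop atTop ↔
      Tendsto (fun k => n k - mIdx p ω n k) atTop atTop := by
    constructor
    · intro h
      rw [tendsto_atTop] at h htail ⊢
      intro b
      filter_upwards [h b, htail b] with k h1 h2
      rw [hmin k]
      exact le_min h1 h2
    · intro h
      refine tendsto_atTop_mono (fun k => ?_) h
      rw [hmin k]
      exact min_le_left _ _
  rw [step1, step2, step3]
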